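/- Consider the cone-constrained vector problem (P): C-minimize f(x) subject to g(x) ∈ −K, where f : X → ℝⁿ and g : X → ℝᵐ are defined on an open set X ⊆ ℝˢ, C ⊆ ℝⁿ and K ⊆ ℝᵐ are closed convex cones with vertex at the origin, and C has nonempty interior. Let S := {x ∈ X : g(x) ∈ −K} and suppose x̄ ∈ S is a weak local minimizer of (P). Define F(x) := max{λ·(f(x) − f(x̄)) + μ·g(x) : (λ,μ) ∈ Λ}, where Λ := {(λ,μ) : λ ∈ C*, μ ∈ K*, ‖λ‖² + ‖μ‖² = 1}. Then F⁻(x̄;u) ≥ 0 and F⁻²(x̄;0;u) ≥ 0 for all u ∈ ℝˢ. -/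
import Mathlib


open Filter Topology RealInnerProductSpace

/-- The positive polar (dual) cone `C* = {λ : λ·y ≥ 0 for all y ∈ C}`. -/
def positivePolar {d : ℕ} (C : Set (EuclideanSpace ℝ (Fin d))) :
    Set (EuclideanSpace ℝ (Fin d)) :=
  {l | ∀ y ∈ C, 0 ≤ ⟪l, y⟫}

/-- The multiplier set `Λ = {(λ,μ) : λ ∈ C*, μ ∈ K*, ‖λ‖² + ‖μ‖² = 1}`. -/
def multiplierSet {n m : ℕ} (C : Set (EuclideanSpace ℝ (Fin n)))
    (K : Set (EuclideanSpace ℝ (Fin m))) :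
    Set (EuclideanSpace ℝ (Fin n) × EuclideanSpace ℝ (Fin m)) :=
  {p | p.1 ∈ positivePolar C ∧ p.2 ∈ positivePolar K ∧ ‖p.1‖ ^ 2 + ‖p.2‖ ^ 2 = 1}

/-- The scalarizing function
`F(x) = max{λ·(f(x) − f(x̄)) + μ·g(x) : (λ,μ) ∈ Λ}` (the maximum is attained since `Λ` is
a nonempty compact set; it is expressed here as a supremum). -/
noncomputable def Fscal {s n m : ℕ}
    (f : EuclideanSpace ℝ (Fin s) → EuclideanSpace ℝ (Fin n))
    (g : EuclideanSpace ℝ (Fin s) → EuclideanSpace ℝ (Fin m))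
    (C : Set (EuclideanSpace ℝ (Fin n))) (K : Set (EuclideanSpace ℝ (Fin m)))
    (x₀ x : EuclideanSpace ℝ (Fin s)) : ℝ :=
  sSup ((fun p : EuclideanSpace ℝ (Fin n) × EuclideanSpace ℝ (Fin m) =>
      ⟪p.1, f x - f x₀⟫ + ⟪p.2, g x⟫) '' multiplierSet C K)

/-- The lower Hadamard directional derivative
`f⁻(x;u) = liminf_{t↓0, u'→u} (f(x+tu') − f(x))/t`, with values in `EReal`. -/
noncomputable def hadamardD1 {E : Type*} [NormedAddCommGroup E] [InnerProductSpace ℝ E]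
    (f : E → EReal) (x u : E) : EReal :=
  Filter.liminf
    (fun p : ℝ × E => (((p.1)⁻¹ : ℝ) : EReal) * (f (x + p.1 • p.2) - f x))
    ((𝓝[>] (0 : ℝ)) ×ˢ 𝓝 u)

/-- The lower Hadamard subdifferential
`∂⁻f(x) = {x* continuous linear | x*(u) ≤ f⁻(x;u) for all u}`. -/
def hadamardSubdiff {E : Type*} [NormedAddCommGroup E] [InnerProductSpace ℝ E]
    (f : E → EReal) (x : E) : Set (E →L[ℝ] ℝ) :=
  {xs | ∀ u : E, ((xs u : ℝ) : EReal) ≤ hadamardD1 f x u}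

/-- The lower second-order Hadamard derivative relative to `x₁ ∈ ∂⁻f(x)`:
`f⁻²(x;x₁;u) = liminf_{t↓0, u'→u} 2(f(x+tu') − f(x) − t·x₁(u'))/t²`. -/
noncomputable def hadamardD2 {E : Type*} [NormedAddCommGroup E] [InnerProductSpace ℝ E]
    (f : E → EReal) (x : E) (x₁ : E →L[ℝ] ℝ) (u : E) : EReal :=
  Filter.liminf
    (fun p : ℝ × E =>
      ((2 / p.1 ^ 2 : ℝ) : EReal) * (f (x + p.1 • p.2) - f x - ((p.1 * x₁ p.2 : ℝ) : EReal)))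
    ((𝓝[>] (0 : ℝ)) ×ˢ 𝓝 u)


open Filter in
private lemma cone_phi_nonpos {d : ℕ} {D : Set (EuclideanSpace ℝ (Fin d))}
    (hcone : ∀ t : ℝ, 0 ≤ t → ∀ y ∈ D, t • y ∈ D)
    (φ : EuclideanSpace ℝ (Fin d) →L[ℝ] ℝ) (c : ℝ)
    (h : ∀ y ∈ D, φ y ≤ c) : ∀ y ∈ D, φ y ≤ 0 := by
  intro y hy
  by_contra hpos
  push_neg at hpos
  set t : ℝ := (|c| + 1) / φ y with ht
  have htpos : 0 < t := div_pos (by positivity) hpos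
  have := h (t • y) (hcone t htpos.le y hy)
  rw [map_smul, smul_eq_mul, ht, div_mul_cancel₀ _ (ne_of_gt hpos)] at this
  have := le_abs_self c
  linarith

private lemma sep_not_interior {d : ℕ} {D : Set (EuclideanSpace ℝ (Fin d))}
    (hconv : Convex ℝ D) (hcone : ∀ t : ℝ, 0 ≤ t → ∀ y ∈ D, t • y ∈ D)
    (hint : (interior D).Nonempty) {v : EuclideanSpace ℝ (Fin d)} (hv : v ∉ interior D) :
    ∃ l : EuclideanSpace ℝ (Fin d), l ≠ 0 ∧ l ∈ positivePolar D ∧ 0 ≤ ⟪l, -v⟫ := by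
  obtain ⟨φ, hφ⟩ := geometric_hahn_banach_open_point hconv.interior isOpen_interior hv
  obtain ⟨y₀, hy₀⟩ := hint
  have hD : ∀ a ∈ D, φ a ≤ φ v := by
    intro a ha
    have key : ∀ t ∈ Set.Ioc (0:ℝ) 1, φ (a + t • (y₀ - a)) < φ v := fun t ht =>
      hφ _ (hconv.add_smul_sub_mem_interior ha hy₀ ht)
    have htends : Filter.Tendsto (fun t : ℝ => φ (a + t • (y₀ - a))) (nhdsWithin 0 (Set.Ioi 0))
        (nhds (φ a)) := by
      have h0 : Filter.Tendsto (fun t : ℝ => t) (nhdsWithin 0 (Set.Ioi 0)) (nhds (0:ℝ)) :=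
        tendsto_id.mono_right nhdsWithin_le_nhds
      have h1 : Filter.Tendsto (fun t : ℝ => a + t • (y₀ - a)) (nhdsWithin 0 (Set.Ioi 0))
          (nhds a) := by
        have := (h0.smul_const (y₀ - a)).const_add a
        simpa using this
      exact (φ.continuous.tendsto a).comp h1
    have hev : ∀ᶠ t in nhdsWithin (0:ℝ) (Set.Ioi 0), φ (a + t • (y₀ - a)) ≤ φ v := by
      filter_upwards [Ioc_mem_nhdsGT_of_mem (Set.mem_Ico.2 ⟨le_refl (0:ℝ), zero_lt_one⟩)]
        with t ht using (key t ht).le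
    exact le_of_tendsto htends hev
  have hD0 : ∀ a ∈ D, φ a ≤ 0 := cone_phi_nonpos hcone φ (φ v) hD
  have h0D : (0 : EuclideanSpace ℝ (Fin d)) ∈ D := by
    simpa using hcone 0 le_rfl y₀ (interior_subset hy₀)
  have hφv : 0 ≤ φ v := by simpa using hD 0 h0D
  refine ⟨(InnerProductSpace.toDual ℝ _).symm (-φ), ?_, ?_, ?_⟩
  · intro h0
    have hz : ∀ x, ⟪(InnerProductSpace.toDual ℝ (EuclideanSpace ℝ (Fin d))).symm (-φ), x⟫
        = (-φ) x := fun x => InnerProductSpace.toDual_symm_apply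
    have hzero : ∀ x, φ x = 0 := by
      intro x
      have := hz x
      rw [h0, inner_zero_left] at this
      simpa using this.symm
    have := hφ y₀ hy₀
    rw [hzero y₀, hzero v] at this
    exact lt_irrefl _ this
  · intro y hy
    rw [InnerProductSpace.toDual_symm_apply]
    simpa using hD0 y hy
  · rw [InnerProductSpace.toDual_symm_apply]
    simpa using hφv

private lemma sep_not_closed {d : ℕ} {D : Set (EuclideanSpace ℝ (Fin d))}
    (hconv : Convex ℝ D) (hclosed : IsClosed D)
    (hcone : ∀ t : ℝ, 0 ≤ t → ∀ y ∈ D, t • y ∈ D)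
    (h0D : (0 : EuclideanSpace ℝ (Fin d)) ∈ D)
    {v : EuclideanSpace ℝ (Fin d)} (hv : v ∉ D) :
    ∃ l : EuclideanSpace ℝ (Fin d), l ∈ positivePolar D ∧ 0 < ⟪l, -v⟫ := by
  obtain ⟨φ, c, hvc, hc⟩ := geometric_hahn_banach_point_closed hconv hclosed hv
  have hc0 : c < 0 := by simpa using hc 0 h0D
  have hpos : ∀ b ∈ D, 0 ≤ φ b := by
    have := cone_phi_nonpos hcone (-φ) (-c) (fun y hy => by
      simpa using (hc y hy).le)
    intro b hb
    have := this b hb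
    simpa using this
  refine ⟨(InnerProductSpace.toDual ℝ _).symm φ, ?_, ?_⟩
  · intro y hy
    rw [InnerProductSpace.toDual_symm_apply]
    exact hpos y hy
  · rw [InnerProductSpace.toDual_symm_apply, map_neg]
    linarith

/-- If `x̄ ∈ S` is a weak local minimizer of the cone-constrained
vector problem (P), then `F⁻(x̄;u) ≥ 0` and `F⁻²(x̄;0;u) ≥ 0` for all `u ∈ ℝˢ`. -/
theorem weak_local_min_hadamard_conditions (s n m : ℕ)
    (X : Set (EuclideanSpace ℝ (Fin s))) (hX : IsOpen X)
    (f : EuclideanSpace ℝ (Fin s) → EuclideanSpace ℝ (Fin n))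
    (g : EuclideanSpace ℝ (Fin s) → EuclideanSpace ℝ (Fin m))
    (C : Set (EuclideanSpace ℝ (Fin n))) (K : Set (EuclideanSpace ℝ (Fin m)))
    (hCclosed : IsClosed C) (hCconv : Convex ℝ C)
    (hCcone : ∀ t : ℝ, 0 ≤ t → ∀ y ∈ C, t • y ∈ C)
    (hCint : (interior C).Nonempty)
    (hKclosed : IsClosed K) (hKconv : Convex ℝ K)
    (hKcone : ∀ t : ℝ, 0 ≤ t → ∀ y ∈ K, t • y ∈ K)
    (x₀ : EuclideanSpace ℝ (Fin s)) (hx₀X : x₀ ∈ X) (hx₀S : -g x₀ ∈ K)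
    (hweak : ∃ N ∈ 𝓝 x₀, ∀ x ∈ N, x ∈ X → -g x ∈ K → f x₀ - f x ∉ interior C) :
    (∀ u : EuclideanSpace ℝ (Fin s),
        0 ≤ hadamardD1 (fun y => ((Fscal f g C K x₀ y : ℝ) : EReal)) x₀ u) ∧
      ∀ u : EuclideanSpace ℝ (Fin s),
        0 ≤ hadamardD2 (fun y => ((Fscal f g C K x₀ y : ℝ) : EReal)) x₀ 0 u := by
    classical
  set F : EuclideanSpace ℝ (Fin s) → ℝ := Fscal f g C K x₀ with hF
  -- boundedness of the image defining F
  have hbdd : ∀ x, BddAbove ((fun p : EuclideanSpace ℝ (Fin n) × EuclideanSpace ℝ (Fin m) =>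
      ⟪p.1, f x - f x₀⟫ + ⟪p.2, g x⟫) '' multiplierSet C K) := by
    intro x
    refine ⟨‖f x - f x₀‖ + ‖g x‖, ?_⟩
    rintro a ⟨p, ⟨h1, h2, h3⟩, rfl⟩
    have hn1 : ‖p.1‖ ≤ 1 := by nlinarith [norm_nonneg p.1, norm_nonneg p.2, sq_nonneg ‖p.2‖]
    have hn2 : ‖p.2‖ ≤ 1 := by nlinarith [norm_nonneg p.1, norm_nonneg p.2, sq_nonneg ‖p.1‖]
    have c1 := real_inner_le_norm p.1 (f x - f x₀)
    have c2 := real_inner_le_norm p.2 (g x)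
    dsimp only
    nlinarith [mul_nonneg (sub_nonneg.2 hn1) (norm_nonneg (f x - f x₀)),
      mul_nonneg (sub_nonneg.2 hn2) (norm_nonneg (g x))]
  have h0K : (0 : EuclideanSpace ℝ (Fin m)) ∈ K := by
    simpa using hKcone 0 le_rfl _ hx₀S
  -- F x₀ ≤ 0
  have hF0 : F x₀ ≤ 0 := by
    apply Real.sSup_nonpos
    rintro a ⟨p, ⟨h1, h2, h3⟩, rfl⟩
    have e1 : ⟪p.1, f x₀ - f x₀⟫ = (0:ℝ) := by simp
    have e2 : (0:ℝ) ≤ ⟪p.2, -g x₀⟫ := h2 _ hx₀S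
    rw [inner_neg_right] at e2
    simp only [e1, zero_add]
    linarith
  obtain ⟨N, hN, hNmin⟩ := hweak
  have hU : N ∩ X ∈ 𝓝 x₀ := Filter.inter_mem hN (hX.mem_nhds hx₀X)
  -- F is nonnegative on N ∩ X
  have hFnn : ∀ x ∈ N ∩ X, 0 ≤ F x := by
    rintro x ⟨hxN, hxX⟩
    by_cases hgx : -g x ∈ K
    · have hv := hNmin x hxN hxX hgx
      obtain ⟨l, hl0, hlpolar, hli⟩ := sep_not_interior hCconv hCcone hCint hv
      rw [neg_sub] at hli
      have hln : (0:ℝ) < ‖l‖ := norm_pos_iff.2 hl0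
      have hmem : ((‖l‖⁻¹ • l, (0 : EuclideanSpace ℝ (Fin m))) ∈ multiplierSet C K) := by
        refine ⟨?_, ?_, ?_⟩
        · intro y hy
          rw [real_inner_smul_left]
          exact mul_nonneg (inv_nonneg.2 hln.le) (hlpolar y hy)
        · intro y hy; simp
        · rw [norm_smul, norm_inv, norm_norm]
          simp [inv_mul_cancel₀ (ne_of_gt hln)]
      have hval : (0:ℝ) ≤ ⟪‖l‖⁻¹ • l, f x - f x₀⟫ + ⟪(0 : EuclideanSpace ℝ (Fin m)), g x⟫ := by
        rw [inner_zero_left, add_zero, real_inner_smul_left]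
        exact mul_nonneg (inv_nonneg.2 hln.le) hli
      exact hval.trans (le_csSup (hbdd x) ⟨_, hmem, rfl⟩)
    · obtain ⟨l, hlpolar, hli⟩ := sep_not_closed hKconv hKclosed hKcone h0K hgx
      rw [neg_neg] at hli
      have hl0 : l ≠ 0 := by
        intro h; rw [h, inner_zero_left] at hli; exact lt_irrefl _ hli
      have hln : (0:ℝ) < ‖l‖ := norm_pos_iff.2 hl0
      have hmem : (((0 : EuclideanSpace ℝ (Fin n)), ‖l‖⁻¹ • l) ∈ multiplierSet C K) := by
        refine ⟨?_, ?_, ?_⟩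
        · intro y hy; simp
        · intro y hy
          rw [real_inner_smul_left]
          exact mul_nonneg (inv_nonneg.2 hln.le) (hlpolar y hy)
        · rw [norm_smul, norm_inv, norm_norm]
          simp [inv_mul_cancel₀ (ne_of_gt hln)]
      have hval : (0:ℝ) ≤ ⟪(0 : EuclideanSpace ℝ (Fin n)), f x - f x₀⟫ + ⟪‖l‖⁻¹ • l, g x⟫ := by
        rw [inner_zero_left, zero_add, real_inner_smul_left]
        exact mul_nonneg (inv_nonneg.2 hln.le) hli.le
      exact hval.trans (le_csSup (hbdd x) ⟨_, hmem, rfl⟩)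
  have hFx₀ : F x₀ = 0 :=
    le_antisymm hF0 (hFnn x₀ ⟨mem_of_mem_nhds hN, hx₀X⟩)
  -- the base point moves into N ∩ X eventually
  have htd : ∀ u : EuclideanSpace ℝ (Fin s),
      Filter.Tendsto (fun p : ℝ × EuclideanSpace ℝ (Fin s) => x₀ + p.1 • p.2)
        ((𝓝[>] (0:ℝ)) ×ˢ 𝓝 u) (𝓝 x₀) := by
    intro u
    have h1 : Filter.Tendsto (fun p : ℝ × EuclideanSpace ℝ (Fin s) => p.1)
        ((𝓝[>] (0:ℝ)) ×ˢ 𝓝 u) (𝓝 (0:ℝ)) :=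
      Filter.tendsto_fst.mono_right nhdsWithin_le_nhds
    have h2 : Filter.Tendsto (fun p : ℝ × EuclideanSpace ℝ (Fin s) => p.2)
        ((𝓝[>] (0:ℝ)) ×ˢ 𝓝 u) (𝓝 u) := Filter.tendsto_snd
    have := (h1.smul h2).const_add x₀
    simpa using this
  have hevmem : ∀ u : EuclideanSpace ℝ (Fin s),
      ∀ᶠ p : ℝ × EuclideanSpace ℝ (Fin s) in (𝓝[>] (0:ℝ)) ×ˢ 𝓝 u,
        x₀ + p.1 • p.2 ∈ N ∩ X := fun u => (htd u).eventually_mem hU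
  have hevpos : ∀ u : EuclideanSpace ℝ (Fin s),
      ∀ᶠ p : ℝ × EuclideanSpace ℝ (Fin s) in (𝓝[>] (0:ℝ)) ×ˢ 𝓝 u, 0 < p.1 := by
    intro u
    have : ∀ᶠ t in 𝓝[>] (0:ℝ), 0 < t :=
      Filter.eventually_mem_set.2 self_mem_nhdsWithin
    exact this.prod_inl (𝓝 u)
  constructor
  · intro u
    unfold hadamardD1
    refine le_liminf_of_le (by isBoundedDefault) ?_
    filter_upwards [hevmem u, hevpos u] with p hp hpt
    have ha : 0 ≤ F (x₀ + p.1 • p.2) := hFnn _ hp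
    rw [show ((F x₀ : ℝ) : EReal) = (0:EReal) by rw [hFx₀]; rfl, sub_zero,
      ← EReal.coe_mul]
    exact_mod_cast mul_nonneg (inv_nonneg.2 hpt.le) ha
  · intro u
    unfold hadamardD2
    refine le_liminf_of_le (by isBoundedDefault) ?_
    filter_upwards [hevmem u, hevpos u] with p hp hpt
    have ha : 0 ≤ F (x₀ + p.1 • p.2) := hFnn _ hp
    have hz : (p.1 * (0 : EuclideanSpace ℝ (Fin s) →L[ℝ] ℝ) p.2 : ℝ) = 0 := by simp
    rw [show ((F x₀ : ℝ) : EReal) = (0:EReal) by rw [hFx₀]; rfl, sub_zero, hz,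
      EReal.coe_zero, sub_zero, ← EReal.coe_mul]
    have h2 : (0:ℝ) ≤ 2 / p.1 ^ 2 := by positivity
    exact_mod_cast mul_nonneg h2 ha
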